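/- Let A_1,...,A_k be n×n real matrices, p ∈ Δ_k, and suppose P ∈ 𝕊ⁿ is positive definite with Σ_i p_i Aᵢᵀ P Aᵢ − P ≼ −Q for some positive definite Q. Then the linear operator L on symmetric matrices defined by L(M) = Σ_i p_i A_i M A_iᵀ satisfies: for every positive semidefinite M₀, the iterates M_{t+1} = L(M_t) satisfy trace(P M_t) ≤ (1 − λ_min(Q)/λ_max(P))^t · trace(P M₀), and hence M_t → 0. -/

import Mathlib

open Finset Matrix

lemma lyap_diag_nonneg {n : ℕ} {X : Matrix (Fin n) (Fin n) ℝ} (hX : X.PosSemidef)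
    (i : Fin n) : 0 ≤ X i i := by
  have := hX.dotProduct_mulVec_nonneg (Pi.single i 1)
  simpa [mulVec_single, single_dotProduct] using this

lemma lyap_trace_nonneg {n : ℕ} {X : Matrix (Fin n) (Fin n) ℝ} (hX : X.PosSemidef) :
    0 ≤ X.trace := by
  exact Finset.sum_nonneg fun i _ => lyap_diag_nonneg hX i

lemma lyap_trace_mul_nonneg {n : ℕ} {X Y : Matrix (Fin n) (Fin n) ℝ}
    (hX : X.PosSemidef) (hY : Y.PosSemidef) : 0 ≤ (X * Y).trace := by
  obtain ⟨B, rfl⟩ : ∃ B : Matrix (Fin n) (Fin n) ℝ, Y = Bᵀ * B := by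
    open scoped MatrixOrder in
    have h0 : 0 ≤ Y := Matrix.nonneg_iff_posSemidef.mpr hY
    open scoped MatrixOrder in
    refine ⟨CFC.sqrt Y, ?_⟩
    open scoped MatrixOrder in
    have hs : star (CFC.sqrt Y) = CFC.sqrt Y := (IsSelfAdjoint.of_nonneg (CFC.sqrt_nonneg Y)).star_eq
    rw [← conjTranspose_eq_transpose_of_trivial, ← star_eq_conjTranspose, hs]
    open scoped MatrixOrder in
    exact (CFC.sqrt_mul_sqrt_self Y h0).symm
  rw [← Matrix.mul_assoc, trace_mul_comm]
  exact lyap_trace_nonneg (by simpa [Matrix.mul_assoc] using hX.mul_mul_conjTranspose_same B)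

lemma lyap_smul_psd {n : ℕ} {c : ℝ} (hc : 0 ≤ c) {X : Matrix (Fin n) (Fin n) ℝ}
    (hX : X.PosSemidef) : (c • X).PosSemidef := by
  constructor
  · show (c • X)ᴴ = c • X
    rw [conjTranspose_smul, hX.1.eq, star_trivial]
  · exact (hX.smul hc).2

lemma lyap_diag_helper {n : ℕ} (f : Fin n → ℝ) (c : ℝ) :
    diagonal (fun i => f i - c) =
      diagonal (RCLike.ofReal ∘ f) - c • (1 : Matrix (Fin n) (Fin n) ℝ) := by
  ext i j
  by_cases h : i = j <;>
    simp [diagonal_apply, Matrix.one_apply, h, RCLike.ofReal, Function.comp]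

lemma lyap_smul_one_conj {n : ℕ} (U : Matrix (Fin n) (Fin n) ℝ) (hUU : U * star U = 1)
    (c : ℝ) : U * (c • 1) * star U = c • (1 : Matrix (Fin n) (Fin n) ℝ) := by
  rw [Matrix.mul_smul, Matrix.mul_one, Matrix.smul_mul, hUU]

lemma lyap_sub_smul_one_psd {n : ℕ} {X : Matrix (Fin n) (Fin n) ℝ} (hX : X.IsHermitian)
    {c : ℝ} (hc : ∀ i, c ≤ hX.eigenvalues i) : (X - c • 1).PosSemidef := by
  have hUU : (hX.eigenvectorUnitary : Matrix (Fin n) (Fin n) ℝ) *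
      star (hX.eigenvectorUnitary : Matrix (Fin n) (Fin n) ℝ) = 1 :=
    (Matrix.mem_unitaryGroup_iff).mp hX.eigenvectorUnitary.2
  have key : X - c • 1 = (hX.eigenvectorUnitary : Matrix (Fin n) (Fin n) ℝ) *
      (diagonal (fun i => hX.eigenvalues i - c)) *
      star (hX.eigenvectorUnitary : Matrix (Fin n) (Fin n) ℝ) := by
    rw [lyap_diag_helper, Matrix.mul_sub, Matrix.sub_mul]
    congr 1
    · exact hX.spectral_theorem
    · exact (lyap_smul_one_conj _ hUU c).symm
  rw [key]
  have : (diagonal (fun i => hX.eigenvalues i - c)).PosSemidef :=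
    posSemidef_diagonal_iff.mpr fun i => by simpa using hc i
  simpa [Matrix.star_eq_conjTranspose] using
    this.mul_mul_conjTranspose_same (hX.eigenvectorUnitary : Matrix (Fin n) (Fin n) ℝ)

lemma lyap_diag_helper' {n : ℕ} (f : Fin n → ℝ) (c : ℝ) :
    diagonal (fun i => c - f i) =
      c • (1 : Matrix (Fin n) (Fin n) ℝ) - diagonal (RCLike.ofReal ∘ f) := by
  ext i j
  by_cases h : i = j <;>
    simp [diagonal_apply, Matrix.one_apply, h, RCLike.ofReal, Function.comp]

lemma lyap_smul_one_sub_psd {n : ℕ} {X : Matrix (Fin n) (Fin n) ℝ} (hX : X.IsHermitian)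
    {c : ℝ} (hc : ∀ i, hX.eigenvalues i ≤ c) : (c • 1 - X).PosSemidef := by
  have hUU : (hX.eigenvectorUnitary : Matrix (Fin n) (Fin n) ℝ) *
      star (hX.eigenvectorUnitary : Matrix (Fin n) (Fin n) ℝ) = 1 :=
    (Matrix.mem_unitaryGroup_iff).mp hX.eigenvectorUnitary.2
  have key : c • 1 - X = (hX.eigenvectorUnitary : Matrix (Fin n) (Fin n) ℝ) *
      (diagonal (fun i => c - hX.eigenvalues i)) *
      star (hX.eigenvectorUnitary : Matrix (Fin n) (Fin n) ℝ) := by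
    rw [lyap_diag_helper', Matrix.mul_sub, Matrix.sub_mul]
    congr 1
    · exact (lyap_smul_one_conj _ hUU c).symm
    · exact hX.spectral_theorem
  rw [key]
  have : (diagonal (fun i => c - hX.eigenvalues i)).PosSemidef :=
    posSemidef_diagonal_iff.mpr fun i => by simpa using hc i
  simpa [Matrix.star_eq_conjTranspose] using
    this.mul_mul_conjTranspose_same (hX.eigenvectorUnitary : Matrix (Fin n) (Fin n) ℝ)

lemma lyap_abs_entry_le_trace {n : ℕ} {X : Matrix (Fin n) (Fin n) ℝ} (hX : X.PosSemidef)
    (i j : Fin n) : |X i j| ≤ X.trace := by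
  have hdiag : ∀ l : Fin n, X l l ≤ X.trace := fun l =>
    Finset.single_le_sum (fun m _ => lyap_diag_nonneg hX m) (Finset.mem_univ l)
  have hsym : X j i = X i j := by
    have := congrFun (congrFun hX.1 i) j
    simpa [conjTranspose_apply] using this
  have hplus := hX.dotProduct_mulVec_nonneg (Pi.single i 1 + Pi.single j 1)
  have hminus := hX.dotProduct_mulVec_nonneg (Pi.single i 1 - Pi.single j 1)
  simp only [star_trivial, mulVec_add, mulVec_sub, mulVec_single, dotProduct_add,
    dotProduct_sub, add_dotProduct, sub_dotProduct, single_dotProduct, mul_one, one_mul,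
    MulOpposite.op_one, one_smul, col_apply] at hplus hminus
  rw [abs_le]
  constructor
  · nlinarith [hdiag i, hdiag j, lyap_diag_nonneg hX i, lyap_diag_nonneg hX j]
  · nlinarith [hdiag i, hdiag j, lyap_diag_nonneg hX i, lyap_diag_nonneg hX j]

set_option maxHeartbeats 2000000 in
/-- if Σᵢ pᵢ AᵢᵀPAᵢ − P ≼ −Q with P, Q ≻ 0, then along the iteration
M_{t+1} = Σᵢ pᵢ Aᵢ M_t Aᵢᵀ from a psd M₀ one has
trace(P M_t) ≤ (1 − λ_min(Q)/λ_max(P))^t trace(P M₀), and M_t → 0. -/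
theorem lyapunov_trace_decay (n k : ℕ) (hn : 0 < n)
    (A : Fin k → Matrix (Fin n) (Fin n) ℝ) (p : Fin k → ℝ)
    (hp : (∀ i, 0 ≤ p i) ∧ ∑ i, p i = 1)
    (P Q : Matrix (Fin n) (Fin n) ℝ) (hP : P.PosDef) (hQ : Q.PosDef)
    (hLyap : ((-Q) - (∑ i, p i • ((A i)ᵀ * P * A i) - P)).PosSemidef)
    (M : ℕ → Matrix (Fin n) (Fin n) ℝ) (hM0 : (M 0).PosSemidef)
    (hMrec : ∀ t, M (t + 1) = ∑ i, p i • (A i * M t * (A i)ᵀ)) :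
    (∀ t : ℕ, (P * M t).trace ≤
        (1 - (Finset.univ.inf' (Finset.univ_nonempty_iff.mpr ⟨⟨0, hn⟩⟩)
                hQ.1.eigenvalues) /
             (Finset.univ.sup' (Finset.univ_nonempty_iff.mpr ⟨⟨0, hn⟩⟩)
                hP.1.eigenvalues)) ^ t * (P * M 0).trace) ∧
      Filter.Tendsto M Filter.atTop (nhds 0) := by
  obtain ⟨hp0, hp1⟩ := hp
  have hct : ∀ (B : Matrix (Fin n) (Fin n) ℝ), Bᴴ = Bᵀ := fun B => by
    ext i j; simp [conjTranspose_apply]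
  set S : Matrix (Fin n) (Fin n) ℝ := ∑ i, p i • ((A i)ᵀ * P * A i) with hS
  have hSpsd : S.PosSemidef := by
    rw [hS]
    apply Finset.sum_induction _ _ (fun a b ha hb => ha.add hb) PosSemidef.zero
    intro i _
    apply lyap_smul_psd (hp0 i)
    have := hP.posSemidef.conjTranspose_mul_mul_same (A i)
    rwa [hct] at this
  have Mpsd : ∀ t, (M t).PosSemidef := by
    intro t
    induction t with
    | zero => exact hM0
    | succ t ih =>
      rw [hMrec]
      apply Finset.sum_induction _ _ (fun a b ha hb => ha.add hb) PosSemidef.zero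
      intro i _
      apply lyap_smul_psd (hp0 i)
      have := ih.mul_mul_conjTranspose_same (A i)
      rwa [hct] at this
  have hPQS : (P - Q - S).PosSemidef := by
    have e : (-Q) - (S - P) = P - Q - S := by abel
    rwa [e] at hLyap
  set qmin := Finset.univ.inf' (Finset.univ_nonempty_iff.mpr ⟨⟨0, hn⟩⟩) hQ.1.eigenvalues
    with hqmin
  set pmax := Finset.univ.sup' (Finset.univ_nonempty_iff.mpr ⟨⟨0, hn⟩⟩) hP.1.eigenvalues
    with hpmaxdef
  set pmin := Finset.univ.inf' (Finset.univ_nonempty_iff.mpr ⟨⟨0, hn⟩⟩) hP.1.eigenvalues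
    with hpmindef
  have hq0 : 0 < qmin := by
    rw [hqmin]
    exact (Finset.lt_inf'_iff _).mpr fun i _ => hQ.eigenvalues_pos i
  have hpmax : 0 < pmax :=
    lt_of_lt_of_le (hP.eigenvalues_pos (⟨0, hn⟩ : Fin n))
      (Finset.le_sup' _ (Finset.mem_univ (⟨0, hn⟩ : Fin n)))
  have hpmin : 0 < pmin := by
    rw [hpmindef]
    exact (Finset.lt_inf'_iff _).mpr fun i _ => hP.eigenvalues_pos i
  have hQlow : (Q - qmin • 1).PosSemidef :=
    lyap_sub_smul_one_psd hQ.1 fun i => Finset.inf'_le _ (Finset.mem_univ i)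
  have hPup : (pmax • 1 - P).PosSemidef :=
    lyap_smul_one_sub_psd hP.1 fun i => Finset.le_sup' _ (Finset.mem_univ i)
  have hPlow : (P - pmin • 1).PosSemidef :=
    lyap_sub_smul_one_psd hP.1 fun i => Finset.inf'_le _ (Finset.mem_univ i)
  clear_value qmin pmax pmin
  have hqp : qmin ≤ pmax := by
    have hsum : ((pmax • 1 : Matrix (Fin n) (Fin n) ℝ) - qmin • 1).PosSemidef := by
      have e : (pmax • 1 : Matrix (Fin n) (Fin n) ℝ) - qmin • 1 =
          (pmax • 1 - P) + ((P - Q - S) + S) + (Q - qmin • 1) := by abel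
      rw [e]
      exact (hPup.add (hPQS.add hSpsd)).add hQlow
    have h := lyap_diag_nonneg hsum ⟨0, hn⟩
    simp only [Matrix.sub_apply, Matrix.smul_apply, Matrix.one_apply_eq, smul_eq_mul,
      mul_one] at h
    linarith
  set c : ℝ := 1 - qmin / pmax with hc
  clear_value c
  have hc0 : 0 ≤ c := by
    have : qmin / pmax ≤ 1 := (div_le_one hpmax).mpr hqp
    rw [hc]; linarith
  have hc1 : c < 1 := by
    have : 0 < qmin / pmax := div_pos hq0 hpmax
    rw [hc]; linarith
  have htr1 : ∀ t, (P * M (t + 1)).trace = (S * M t).trace := by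
    intro t
    have e3 : ∀ i, (P * (A i * M t * (A i)ᵀ)).trace = (((A i)ᵀ * P * A i) * M t).trace := by
      intro i
      calc (P * (A i * M t * (A i)ᵀ)).trace
          = ((P * A i * M t) * (A i)ᵀ).trace := by
            rw [show P * (A i * M t * (A i)ᵀ) = P * A i * M t * (A i)ᵀ by
              simp only [Matrix.mul_assoc]]
        _ = ((A i)ᵀ * (P * A i * M t)).trace := trace_mul_comm _ _
        _ = (((A i)ᵀ * P * A i) * M t).trace := by simp only [Matrix.mul_assoc]
    have e1 : P * M (t + 1) = ∑ i, p i • (P * (A i * M t * (A i)ᵀ)) := by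
      rw [hMrec t, Finset.mul_sum]
      simp_rw [mul_smul_comm]
    have e2 : S * M t = ∑ i, p i • (((A i)ᵀ * P * A i) * M t) := by
      rw [hS, Finset.sum_mul]
      simp_rw [smul_mul_assoc]
    rw [e1, e2, trace_sum, trace_sum]
    simp_rw [trace_smul, smul_eq_mul, e3]
  have step : ∀ t, (P * M (t + 1)).trace ≤ c * (P * M t).trace := by
    intro t
    have hMt := Mpsd t
    have h5 : 0 ≤ ((P - Q - S) * M t).trace := lyap_trace_mul_nonneg hPQS hMt
    have h5' : ((P - Q - S) * M t).trace =
        (P * M t).trace - (Q * M t).trace - (S * M t).trace := by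
      simp only [Matrix.sub_mul, trace_sub]
    have h6 : 0 ≤ ((Q - qmin • 1) * M t).trace := lyap_trace_mul_nonneg hQlow hMt
    have h6' : ((Q - qmin • 1) * M t).trace = (Q * M t).trace - qmin * (M t).trace := by
      simp only [Matrix.sub_mul, trace_sub, Matrix.smul_mul, Matrix.one_mul, trace_smul,
        smul_eq_mul]
    have h7 : 0 ≤ ((pmax • 1 - P) * M t).trace := lyap_trace_mul_nonneg hPup hMt
    have h7' : ((pmax • 1 - P) * M t).trace = pmax * (M t).trace - (P * M t).trace := by
      simp only [Matrix.sub_mul, trace_sub, Matrix.smul_mul, Matrix.one_mul, trace_smul,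
        smul_eq_mul]
    have htrM : 0 ≤ (M t).trace := lyap_trace_nonneg hMt
    rw [htr1 t]
    have hPle : (P * M t).trace ≤ pmax * (M t).trace := by linarith
    have hfin : (qmin / pmax) * (P * M t).trace ≤ qmin * (M t).trace := by
      calc (qmin / pmax) * (P * M t).trace
          ≤ (qmin / pmax) * (pmax * (M t).trace) :=
            mul_le_mul_of_nonneg_left hPle (le_of_lt (div_pos hq0 hpmax))
        _ = qmin * (M t).trace := by field_simp
    have hcr : c * (P * M t).trace =
        (P * M t).trace - (qmin / pmax) * (P * M t).trace := by rw [hc]; ring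
    have k1 : (S * M t).trace ≤ (P * M t).trace - qmin * (M t).trace := by linarith
    have k2 : (P * M t).trace - qmin * (M t).trace ≤ c * (P * M t).trace := by linarith
    linarith
  have decay : ∀ t, (P * M t).trace ≤ c ^ t * (P * M 0).trace := by
    intro t
    induction t with
    | zero => simp
    | succ t ih =>
      calc (P * M (t + 1)).trace ≤ c * (P * M t).trace := step t
        _ ≤ c * (c ^ t * (P * M 0).trace) := mul_le_mul_of_nonneg_left ih hc0
        _ = c ^ (t + 1) * (P * M 0).trace := by ring
  refine ⟨decay, ?_⟩
  have hb : Filter.Tendsto (fun t => c ^ t * (P * M 0).trace / pmin) Filter.atTop (nhds 0) := by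
    have h := tendsto_pow_atTop_nhds_zero_of_lt_one hc0 hc1
    have := (h.mul_const ((P * M 0).trace)).div_const pmin
    simpa using this
  have hMbound : ∀ t (i j : Fin n), |M t i j| ≤ c ^ t * (P * M 0).trace / pmin := by
    intro t i j
    have h1 := lyap_abs_entry_le_trace (Mpsd t) i j
    have h2 : pmin * (M t).trace ≤ (P * M t).trace := by
      have h3 := lyap_trace_mul_nonneg hPlow (Mpsd t)
      have e : ((P - pmin • 1) * M t).trace = (P * M t).trace - pmin * (M t).trace := by
        simp only [Matrix.sub_mul, trace_sub, Matrix.smul_mul, Matrix.one_mul, trace_smul,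
          smul_eq_mul]
      linarith
    have h4 := decay t
    have h5 : (M t).trace ≤ c ^ t * (P * M 0).trace / pmin := by
      rw [le_div_iff₀ hpmin]
      nlinarith
    linarith
  apply tendsto_pi_nhds.mpr
  intro i
  apply tendsto_pi_nhds.mpr
  intro j
  have : (0 : Matrix (Fin n) (Fin n) ℝ) i j = 0 := rfl
  rw [show (0 : Matrix (Fin n) (Fin n) ℝ) i = fun _ => (0 : ℝ) from rfl]
  exact squeeze_zero_norm (fun t => by simpa [Real.norm_eq_abs] using hMbound t i j) hb
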